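/- Let G be a group and n ≥ 1. Let (F_*, ∂_*) and (P_*, δ_*) be two FP_{n+1}-resolutions of ℤ over ℤ[G], with filling norms ‖·‖_{F_n}, ‖·‖_{F_{n+1}}, ‖·‖_{P_n}, ‖·‖_{P_{n+1}} chosen on the degree-n and degree-(n+1) modules. Suppose f_* : F_* → P_* and g_* : P_* → F_* are chain maps of ℤ[G]-module complexes commuting with the augmentations to ℤ, and h_i : F_i → F_{i+1} (for 0 ≤ i ≤ n, with h_{-1} = 0) are ℤ[G]-module maps satisfying ∂_{i+1} ∘ h_i + h_{i-1} ∘ ∂_i = g_i ∘ f_i − id on F_i. Then there exists a constant C > 0 such that for every α ∈ ker ∂_n (note that then f_n(α) ∈ ker δ_n), one has ‖α‖_{∂_{n+1}} ≤ C·‖f_n(α)‖_{δ_{n+1}} + C·‖α‖_{F_n}. -/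

import Mathlib

/-- The ℓ1-norm on the based finitely generated free `ℤ[G]`-module `Fin r →₀ ℤ[G]`. -/
noncomputable def l1 {G : Type*} [Group G] {r : ℕ}
    (x : Fin r →₀ MonoidAlgebra ℤ G) : ℕ :=
  x.sum fun _ a => Finsupp.sum a.coeff fun _ z => z.natAbs

/-- The filling norm on `M` induced by a surjection `η` from a based finitely
generated free `ℤ[G]`-module: `‖m‖_η = min { ‖x‖₁ : η x = m }`. -/
noncomputable def fillNorm {G : Type*} [Group G] {r : ℕ}
    {M : Type*} [AddCommGroup M] [Module (MonoidAlgebra ℤ G) M]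
    (η : (Fin r →₀ MonoidAlgebra ℤ G) →ₗ[MonoidAlgebra ℤ G] M) (m : M) : ℕ :=
  sInf {n : ℕ | ∃ x, η x = m ∧ l1 x = n}

/-- Given a boundary map `d : A → B` (playing the role of `∂_{n+1}`) and a filling
norm on `A` induced by `η`, the filling norm `‖γ‖_{∂_{n+1}} = min {‖μ‖_A : d μ = γ}`
of a cycle `γ`. -/
noncomputable def bdryNorm {G : Type*} [Group G]
    {A B : Type*} [AddCommGroup A] [Module (MonoidAlgebra ℤ G) A]
    [AddCommGroup B] [Module (MonoidAlgebra ℤ G) B] {r : ℕ}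
    (d : A →ₗ[MonoidAlgebra ℤ G] B)
    (η : (Fin r →₀ MonoidAlgebra ℤ G) →ₗ[MonoidAlgebra ℤ G] A) (γ : B) : ℕ :=
  sInf {c : ℕ | ∃ μ, d μ = γ ∧ fillNorm η μ = c}

/-- `ℤ` with the trivial `G`-action, as a `ℤ[G]`-module via the augmentation map. -/
def TrivialZ (G : Type*) [Group G] : Type := ℤ

noncomputable instance (G : Type*) [Group G] : AddCommGroup (TrivialZ G) :=
  inferInstanceAs (AddCommGroup ℤ)

noncomputable instance (G : Type*) [Group G] : Module (MonoidAlgebra ℤ G) (TrivialZ G) :=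
  Module.compHom ℤ ((MonoidAlgebra.lift ℤ ℤ G) 1).toRingHom

section Aux

open Finsupp

/-- ℓ1 norm of a ℤ-valued finsupp (e.g. an element of `ℤ[G]`). -/
noncomputable def L1 {ι : Type*} (a : ι →₀ ℤ) : ℕ := a.sum fun _ z => z.natAbs

lemma L1_eq_sum {ι : Type*} (a : ι →₀ ℤ) {s : Finset ι} (hs : a.support ⊆ s) :
    L1 a = ∑ i ∈ s, (a i).natAbs :=
  Finsupp.sum_of_support_subset a hs _ (by simp)

lemma L1_zero {ι : Type*} : L1 (0 : ι →₀ ℤ) = 0 := by simp [L1]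

lemma L1_add_le {ι : Type*} (a b : ι →₀ ℤ) : L1 (a + b) ≤ L1 a + L1 b := by
  classical
  rw [L1_eq_sum (a + b) Finsupp.support_add,
    L1_eq_sum a Finset.subset_union_left, L1_eq_sum b Finset.subset_union_right,
    ← Finset.sum_add_distrib]
  exact Finset.sum_le_sum fun i _ => by simpa using Int.natAbs_add_le (a i) (b i)

lemma L1_neg {ι : Type*} (a : ι →₀ ℤ) : L1 (-a) = L1 a := by
  simp [L1, Finsupp.sum, Finsupp.support_neg]

lemma L1_finset_sum_le {ι κ : Type*} (s : Finset κ) (f : κ → ι →₀ ℤ) :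
    L1 (∑ k ∈ s, f k) ≤ ∑ k ∈ s, L1 (f k) := by
  classical
  induction s using Finset.induction_on with
  | empty => simp [L1_zero]
  | insert _ _ hx ih =>
    rw [Finset.sum_insert hx, Finset.sum_insert hx]
    exact (L1_add_le _ _).trans (Nat.add_le_add_left ih _)

lemma L1_single_le {ι : Type*} (i : ι) (z : ℤ) : L1 (Finsupp.single i z) ≤ z.natAbs :=
  le_of_eq (Finsupp.sum_single_index (by simp))

lemma L1_mul_le {G : Type*} [Group G] (a b : MonoidAlgebra ℤ G) :
    L1 (a * b).coeff ≤ L1 a.coeff * L1 b.coeff := by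
  classical
  have hab : (a * b).coeff = ∑ g ∈ a.coeff.support, ∑ h ∈ b.coeff.support,
      Finsupp.single (g * h) (a.coeff g * b.coeff h) := by
    rw [MonoidAlgebra.mul_def]
    simp [Finsupp.sum, MonoidAlgebra.coeff_sum, MonoidAlgebra.coeff_single]
  rw [hab]
  calc L1 (∑ g ∈ a.coeff.support, ∑ h ∈ b.coeff.support, Finsupp.single (g * h) (a.coeff g * b.coeff h))
      ≤ ∑ g ∈ a.coeff.support, L1 (∑ h ∈ b.coeff.support, Finsupp.single (g * h) (a.coeff g * b.coeff h)) :=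
        L1_finset_sum_le _ _
    _ ≤ ∑ g ∈ a.coeff.support, ∑ h ∈ b.coeff.support, L1 (Finsupp.single (g * h) (a.coeff g * b.coeff h)) :=
        Finset.sum_le_sum fun g _ => L1_finset_sum_le _ _
    _ ≤ ∑ g ∈ a.coeff.support, ∑ h ∈ b.coeff.support, (a.coeff g).natAbs * (b.coeff h).natAbs :=
        Finset.sum_le_sum fun g _ => Finset.sum_le_sum fun h _ =>
          (L1_single_le _ _).trans (le_of_eq (Int.natAbs_mul _ _))
    _ = L1 a.coeff * L1 b.coeff := by
        rw [L1_eq_sum a.coeff subset_rfl, L1_eq_sum b.coeff subset_rfl, Finset.sum_mul_sum]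

variable {G : Type*} [Group G] {r : ℕ}

lemma l1_eq_sum (x : Fin r →₀ MonoidAlgebra ℤ G) {s : Finset (Fin r)}
    (hs : x.support ⊆ s) : l1 x = ∑ i ∈ s, L1 (x i).coeff :=
  Finsupp.sum_of_support_subset x hs _ (by simp [L1])

lemma l1_zero : l1 (0 : Fin r →₀ MonoidAlgebra ℤ G) = 0 := by simp [l1]

lemma l1_add_le (x y : Fin r →₀ MonoidAlgebra ℤ G) : l1 (x + y) ≤ l1 x + l1 y := by
  classical
  rw [l1_eq_sum (x + y) Finsupp.support_add,
    l1_eq_sum x Finset.subset_union_left, l1_eq_sum y Finset.subset_union_right,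
    ← Finset.sum_add_distrib]
  exact Finset.sum_le_sum fun i _ => by
    rw [Finsupp.add_apply, MonoidAlgebra.coeff_add]; exact L1_add_le _ _

lemma l1_neg (x : Fin r →₀ MonoidAlgebra ℤ G) : l1 (-x) = l1 x := by
  rw [l1_eq_sum (-x) (Finsupp.support_neg x).le, l1_eq_sum x subset_rfl]
  exact Finset.sum_congr rfl fun i _ => by rw [Finsupp.neg_apply, MonoidAlgebra.coeff_neg, L1_neg]

lemma l1_smul_le (z : MonoidAlgebra ℤ G) (x : Fin r →₀ MonoidAlgebra ℤ G) :
    l1 (z • x) ≤ L1 z.coeff * l1 x := by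
  rw [l1_eq_sum (z • x) Finsupp.support_smul, l1_eq_sum x subset_rfl, Finset.mul_sum]
  refine Finset.sum_le_sum fun i _ => ?_
  rw [Finsupp.smul_apply, smul_eq_mul]
  exact L1_mul_le z (x i)

variable {M : Type*} [AddCommGroup M] [Module (MonoidAlgebra ℤ G) M]
  (η : (Fin r →₀ MonoidAlgebra ℤ G) →ₗ[MonoidAlgebra ℤ G] M)

lemma fillNorm_le {x : Fin r →₀ MonoidAlgebra ℤ G} {a : M} (hx : η x = a) :
    fillNorm η a ≤ l1 x :=
  Nat.sInf_le ⟨x, hx, rfl⟩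

lemma fillNorm_spec (hη : Function.Surjective η) (a : M) :
    ∃ x, η x = a ∧ l1 x = fillNorm η a := by
  have hne : {n : ℕ | ∃ x, η x = a ∧ l1 x = n}.Nonempty := by
    obtain ⟨x, hx⟩ := hη a
    exact ⟨l1 x, x, hx, rfl⟩
  exact Nat.sInf_mem hne

lemma fillNorm_zero : fillNorm η 0 = 0 :=
  Nat.le_zero.mp (by simpa [l1_zero] using fillNorm_le η (map_zero η))

lemma fillNorm_add_le (hη : Function.Surjective η) (a b : M) :
    fillNorm η (a + b) ≤ fillNorm η a + fillNorm η b := by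
  obtain ⟨x, hx, hlx⟩ := fillNorm_spec η hη a
  obtain ⟨y, hy, hly⟩ := fillNorm_spec η hη b
  calc fillNorm η (a + b) ≤ l1 (x + y) := fillNorm_le η (by rw [map_add, hx, hy])
    _ ≤ l1 x + l1 y := l1_add_le x y
    _ = _ := by rw [hlx, hly]

lemma fillNorm_neg_le (hη : Function.Surjective η) (a : M) :
    fillNorm η (-a) ≤ fillNorm η a := by
  obtain ⟨x, hx, hlx⟩ := fillNorm_spec η hη a
  calc fillNorm η (-a) ≤ l1 (-x) := fillNorm_le η (by rw [map_neg, hx])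
    _ = l1 x := l1_neg x
    _ = _ := hlx

lemma fillNorm_smul_le (hη : Function.Surjective η) (z : MonoidAlgebra ℤ G) (a : M) :
    fillNorm η (z • a) ≤ L1 z.coeff * fillNorm η a := by
  obtain ⟨x, hx, hlx⟩ := fillNorm_spec η hη a
  calc fillNorm η (z • a) ≤ l1 (z • x) := fillNorm_le η (by rw [map_smul, hx])
    _ ≤ L1 z.coeff * l1 x := l1_smul_le z x
    _ = _ := by rw [hlx]

lemma fillNorm_sum_le (hη : Function.Surjective η) {κ : Type*} (s : Finset κ)
    (v : κ → M) : fillNorm η (∑ k ∈ s, v k) ≤ ∑ k ∈ s, fillNorm η (v k) := by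
  classical
  induction s using Finset.induction_on with
  | empty => simp [fillNorm_zero]
  | insert _ _ hx ih =>
    rw [Finset.sum_insert hx, Finset.sum_insert hx]
    exact (fillNorm_add_le η hη _ _).trans (Nat.add_le_add_left ih _)

/-- Any `ℤ[G]`-linear map between f.g. modules with chosen filling norms is
boundedly Lipschitz for the filling norms. -/
lemma exists_fillNorm_bound {r s : ℕ} {M N : Type*}
    [AddCommGroup M] [Module (MonoidAlgebra ℤ G) M]
    [AddCommGroup N] [Module (MonoidAlgebra ℤ G) N]
    (ηM : (Fin r →₀ MonoidAlgebra ℤ G) →ₗ[MonoidAlgebra ℤ G] M)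
    (ηN : (Fin s →₀ MonoidAlgebra ℤ G) →ₗ[MonoidAlgebra ℤ G] N)
    (hηM : Function.Surjective ηM) (hηN : Function.Surjective ηN)
    (T : M →ₗ[MonoidAlgebra ℤ G] N) :
    ∃ C : ℕ, 0 < C ∧ ∀ x, fillNorm ηN (T x) ≤ C * fillNorm ηM x := by
  classical
  set C0 : ℕ := Finset.univ.sup
    (fun i : Fin r => fillNorm ηN (T (ηM (Finsupp.single i 1)))) with hC0
  refine ⟨C0 + 1, Nat.succ_pos _, fun x => ?_⟩
  obtain ⟨ξ, hξ, hl⟩ := fillNorm_spec ηM hηM x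
  have key : T x = ∑ i ∈ ξ.support, (ξ i) • T (ηM (Finsupp.single i 1)) := by
    conv_lhs => rw [← hξ, ← Finsupp.sum_single ξ]
    rw [Finsupp.sum, map_sum, map_sum]
    refine Finset.sum_congr rfl fun i _ => ?_
    have : Finsupp.single i (ξ i) = (ξ i) • Finsupp.single i (1 : MonoidAlgebra ℤ G) := by
      rw [Finsupp.smul_single', mul_one]
    rw [this, map_smul, map_smul]
  calc fillNorm ηN (T x)
      ≤ ∑ i ∈ ξ.support, fillNorm ηN ((ξ i) • T (ηM (Finsupp.single i 1))) := by
        rw [key]; exact fillNorm_sum_le ηN hηN _ _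
    _ ≤ ∑ i ∈ ξ.support, L1 (ξ i).coeff * fillNorm ηN (T (ηM (Finsupp.single i 1))) :=
        Finset.sum_le_sum fun i _ => fillNorm_smul_le ηN hηN _ _
    _ ≤ ∑ i ∈ ξ.support, L1 (ξ i).coeff * C0 :=
        Finset.sum_le_sum fun i _ =>
          Nat.mul_le_mul_left _ (by rw [hC0]; exact Finset.le_sup (f := fun i : Fin r => fillNorm ηN (T (ηM (Finsupp.single i 1)))) (Finset.mem_univ i))
    _ = l1 ξ * C0 := by rw [← Finset.sum_mul, l1_eq_sum ξ subset_rfl]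
    _ ≤ (C0 + 1) * fillNorm ηM x := by
        rw [hl]
        exact (Nat.mul_le_mul_left _ (Nat.le_succ _)).trans
          (le_of_eq (Nat.mul_comm _ _))

end Aux

/-- Key comparison lemma for the well-definedness of the homological filling function.
Here `n = m + 1 ≥ 1`; `dF i : F (i+1) → F i` is the differential `∂_{i+1}` of the
`FP_{n+1}`-resolution `(F_*, ∂_*)` of `ℤ` over `ℤ[G]`, and similarly `dP` is the
differential `δ_*` of `(P_*, δ_*)`; `f_*, g_*` are chain maps and `h_*` a partial
chain homotopy witnessing `∂_{i+1} ∘ h_i + h_{i-1} ∘ ∂_i = g_i ∘ f_i - id` for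
`0 ≤ i ≤ n` (with `h_{-1} = 0`). -/
theorem filling_norm_comparison_of_chain_homotopy
    (G : Type*) [Group G] (m : ℕ)
    (F P : ℕ → Type*)
    [∀ i, AddCommGroup (F i)] [∀ i, Module (MonoidAlgebra ℤ G) (F i)]
    [∀ i, AddCommGroup (P i)] [∀ i, Module (MonoidAlgebra ℤ G) (P i)]
    (dF : ∀ i, F (i + 1) →ₗ[MonoidAlgebra ℤ G] F i)
    (dP : ∀ i, P (i + 1) →ₗ[MonoidAlgebra ℤ G] P i)
    (εF : F 0 →ₗ[MonoidAlgebra ℤ G] TrivialZ G)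
    (εP : P 0 →ₗ[MonoidAlgebra ℤ G] TrivialZ G)
    -- each module in degrees 0, …, n+1 = m+2 is finitely generated projective
    (hFproj : ∀ i ≤ m + 2, Module.Projective (MonoidAlgebra ℤ G) (F i))
    (hFfin : ∀ i ≤ m + 2, Module.Finite (MonoidAlgebra ℤ G) (F i))
    (hPproj : ∀ i ≤ m + 2, Module.Projective (MonoidAlgebra ℤ G) (P i))
    (hPfin : ∀ i ≤ m + 2, Module.Finite (MonoidAlgebra ℤ G) (P i))
    -- exactness of (F_*, ∂_*) at ℤ and at F_0, …, F_n
    (hεF : Function.Surjective εF)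
    (hF0 : LinearMap.range (dF 0) = LinearMap.ker εF)
    (hFex : ∀ i, i + 1 ≤ m + 1 →
      LinearMap.range (dF (i + 1)) = LinearMap.ker (dF i))
    -- exactness of (P_*, δ_*) at ℤ and at P_0, …, P_n
    (hεP : Function.Surjective εP)
    (hP0 : LinearMap.range (dP 0) = LinearMap.ker εP)
    (hPex : ∀ i, i + 1 ≤ m + 1 →
      LinearMap.range (dP (i + 1)) = LinearMap.ker (dP i))
    -- chosen filling norms on the degree-n and degree-(n+1) modules
    (rFn rFn1 rPn rPn1 : ℕ)
    (ηFn : (Fin rFn →₀ MonoidAlgebra ℤ G) →ₗ[MonoidAlgebra ℤ G] F (m + 1))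
    (hηFn : Function.Surjective ηFn)
    (ηFn1 : (Fin rFn1 →₀ MonoidAlgebra ℤ G) →ₗ[MonoidAlgebra ℤ G] F (m + 2))
    (hηFn1 : Function.Surjective ηFn1)
    (ηPn : (Fin rPn →₀ MonoidAlgebra ℤ G) →ₗ[MonoidAlgebra ℤ G] P (m + 1))
    (hηPn : Function.Surjective ηPn)
    (ηPn1 : (Fin rPn1 →₀ MonoidAlgebra ℤ G) →ₗ[MonoidAlgebra ℤ G] P (m + 2))
    (hηPn1 : Function.Surjective ηPn1)
    -- chain maps f : F_* → P_* and g : P_* → F_* commuting with the augmentations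
    (f : ∀ i, F i →ₗ[MonoidAlgebra ℤ G] P i)
    (g : ∀ i, P i →ₗ[MonoidAlgebra ℤ G] F i)
    (hf : ∀ i ≤ m + 1, (dP i).comp (f (i + 1)) = (f i).comp (dF i))
    (hfε : εP.comp (f 0) = εF)
    (hg : ∀ i ≤ m + 1, (dF i).comp (g (i + 1)) = (g i).comp (dP i))
    (hgε : εF.comp (g 0) = εP)
    -- chain homotopy h_i : F_i → F_{i+1}, 0 ≤ i ≤ n, with h_{-1} = 0:
    -- ∂_{i+1} ∘ h_i + h_{i-1} ∘ ∂_i = g_i ∘ f_i - id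
    (h : ∀ i, F i →ₗ[MonoidAlgebra ℤ G] F (i + 1))
    (hh0 : (dF 0).comp (h 0) = (g 0).comp (f 0) - LinearMap.id)
    (hh : ∀ i, i + 1 ≤ m + 1 →
      (dF (i + 1)).comp (h (i + 1)) + (h i).comp (dF i)
        = (g (i + 1)).comp (f (i + 1)) - LinearMap.id) :
    -- conclusion: ‖α‖_{∂_{n+1}} ≤ C ⬝ ‖f_n(α)‖_{δ_{n+1}} + C ⬝ ‖α‖_{F_n}
    ∃ C : ℕ, 0 < C ∧ ∀ α ∈ LinearMap.ker (dF m),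
      bdryNorm (dF (m + 1)) ηFn1 α
        ≤ C * bdryNorm (dP (m + 1)) ηPn1 (f (m + 1) α) + C * fillNorm ηFn α := by
  classical
  obtain ⟨C1, hC1, hgb⟩ := exists_fillNorm_bound ηPn1 ηFn1 hηPn1 hηFn1 (g (m + 2))
  obtain ⟨C2, hC2, hhb⟩ := exists_fillNorm_bound ηFn ηFn1 hηFn hηFn1 (h (m + 1))
  refine ⟨max C1 C2, lt_of_lt_of_le hC1 (le_max_left _ _), fun α hα => ?_⟩
  have hα0 : dF m α = 0 := LinearMap.mem_ker.mp hα
  -- `f α` is a cycle in `P`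
  have hfα : dP m (f (m + 1) α) = 0 := by
    have := LinearMap.congr_fun (hf m (Nat.le_succ m)) α
    simp only [LinearMap.comp_apply] at this
    rw [this, hα0, map_zero]
  -- find a filling `μ` of `f α` realizing its boundary norm
  have hne : {c : ℕ | ∃ μ, dP (m + 1) μ = f (m + 1) α ∧ fillNorm ηPn1 μ = c}.Nonempty := by
    have hmem : f (m + 1) α ∈ LinearMap.ker (dP m) := LinearMap.mem_ker.mpr hfα
    rw [← hPex m le_rfl] at hmem
    obtain ⟨μ, hμ⟩ := hmem
    exact ⟨fillNorm ηPn1 μ, μ, hμ, rfl⟩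
  obtain ⟨μ, hμ, hμn⟩ := Nat.sInf_mem hne
  -- `g μ - h α` is a filling of `α`
  have hw : dF (m + 1) (g (m + 2) μ - h (m + 1) α) = α := by
    have h1 : dF (m + 1) (g (m + 2) μ) = g (m + 1) (dP (m + 1) μ) :=
      LinearMap.congr_fun (hg (m + 1) le_rfl) μ
    have h2 := LinearMap.congr_fun (hh m le_rfl) α
    simp only [LinearMap.add_apply, LinearMap.comp_apply, LinearMap.sub_apply,
      LinearMap.id_apply] at h2
    rw [hα0, map_zero, add_zero] at h2
    rw [map_sub, h1, hμ, h2]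
    abel
  have hbd : bdryNorm (dF (m + 1)) ηFn1 α
      ≤ fillNorm ηFn1 (g (m + 2) μ - h (m + 1) α) :=
    Nat.sInf_le ⟨_, hw, rfl⟩
  have hsplit : fillNorm ηFn1 (g (m + 2) μ - h (m + 1) α)
      ≤ fillNorm ηFn1 (g (m + 2) μ) + fillNorm ηFn1 (h (m + 1) α) := by
    rw [sub_eq_add_neg]
    exact (fillNorm_add_le ηFn1 hηFn1 _ _).trans
      (Nat.add_le_add_left (fillNorm_neg_le ηFn1 hηFn1 _) _)
  have hμn' : fillNorm ηPn1 μ = bdryNorm (dP (m + 1)) ηPn1 (f (m + 1) α) := hμn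
  calc bdryNorm (dF (m + 1)) ηFn1 α
      ≤ fillNorm ηFn1 (g (m + 2) μ) + fillNorm ηFn1 (h (m + 1) α) :=
        hbd.trans hsplit
    _ ≤ C1 * fillNorm ηPn1 μ + C2 * fillNorm ηFn α :=
        Nat.add_le_add (hgb μ) (hhb α)
    _ ≤ max C1 C2 * bdryNorm (dP (m + 1)) ηPn1 (f (m + 1) α)
        + max C1 C2 * fillNorm ηFn α := by
        rw [← hμn']
        exact Nat.add_le_add
          (Nat.mul_le_mul_right _ (le_max_left _ _))
          (Nat.mul_le_mul_right _ (le_max_right _ _))
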